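/- arXiv:1412.6928 — 3 statements merged into one kernel-verified Lean document; each statement's English description precedes it below -/
import Mathlib

section
/- Let f and g be continuous self-maps of a compact metric space (X,d) that are topologically conjugate via a homeomorphism h with f = h ∘ g ∘ h⁻¹. If a pair (u,v) is distributionally scrambled of type 2½ for f, then (h⁻¹(u), h⁻¹(v)) is distributionally scrambled of type 2½ for g. In particular, f is DC2½ chaotic if and only if g is. -/
/-- The lower distribution function `Φ_{(x,y)}(δ)` of the pair `(x,y)` under `f`. -/
noncomputable def lowerDist {X : Type*} [MetricSpace X] (f : X → X) (x y : X) (δ : ℝ) : ℝ :=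
  Filter.liminf (fun m : ℕ =>
    (((Finset.range (m + 1)).filter (fun k => dist (f^[k] x) (f^[k] y) < δ)).card : ℝ) / m)
    Filter.atTop

/-- The upper distribution function `Φ*_{(x,y)}(δ)` of the pair `(x,y)` under `f`. -/
noncomputable def upperDist {X : Type*} [MetricSpace X] (f : X → X) (x y : X) (δ : ℝ) : ℝ :=
  Filter.limsup (fun m : ℕ =>
    (((Finset.range (m + 1)).filter (fun k => dist (f^[k] x) (f^[k] y) < δ)).card : ℝ) / m)
    Filter.atTop

/-- A pair `(x₁,x₂)` is distributionally scrambled of type 2½ for `f`. -/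
def DC2HalfPair {X : Type*} [MetricSpace X] (f : X → X) (x₁ x₂ : X) : Prop :=
  ∃ c s : ℝ, 0 < c ∧ 0 < s ∧ ∀ δ : ℝ, 0 < δ → δ < s →
    lowerDist f x₁ x₂ δ < c ∧ c < upperDist f x₁ x₂ δ

/-- `f` is DC2½ chaotic: it has an uncountable set whose distinct pairs are all
distributionally scrambled of type 2½. -/
def DC2HalfChaotic {X : Type*} [MetricSpace X] (f : X → X) : Prop :=
  ∃ S : Set X, ¬ S.Countable ∧ ∀ x ∈ S, ∀ y ∈ S, x ≠ y → DC2HalfPair f x y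

open Filter

section aux

variable {X : Type*} [MetricSpace X]

private noncomputable def distSeq (f : X → X) (x y : X) (δ : ℝ) (m : ℕ) : ℝ :=
  (((Finset.range (m + 1)).filter (fun k => dist (f^[k] x) (f^[k] y) < δ)).card : ℝ) / m

private lemma lowerDist_eq (f : X → X) (x y : X) (δ : ℝ) :
    lowerDist f x y δ = Filter.liminf (distSeq f x y δ) Filter.atTop := rfl

private lemma upperDist_eq (f : X → X) (x y : X) (δ : ℝ) :
    upperDist f x y δ = Filter.limsup (distSeq f x y δ) Filter.atTop := rfl

private lemma distSeq_nonneg (f : X → X) (x y : X) (δ : ℝ) (m : ℕ) :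
    0 ≤ distSeq f x y δ m := by
  unfold distSeq
  positivity

private lemma distSeq_le_two (f : X → X) (x y : X) (δ : ℝ) (m : ℕ) :
    distSeq f x y δ m ≤ 2 := by
  unfold distSeq
  rcases Nat.eq_zero_or_pos m with hm | hm
  · simp [hm]
  · rw [div_le_iff₀ (by exact_mod_cast hm)]
    have h1 : (((Finset.range (m + 1)).filter (fun k => dist (f^[k] x) (f^[k] y) < δ)).card : ℝ)
        ≤ (m + 1 : ℝ) := by
      have := Finset.card_filter_le (Finset.range (m + 1))
        (fun k => dist (f^[k] x) (f^[k] y) < δ)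
      exact_mod_cast (by simpa using this : _ ≤ m + 1)
    have h2 : (m + 1 : ℝ) ≤ 2 * m := by
      have : (1 : ℝ) ≤ m := by exact_mod_cast hm
      linarith
    linarith

private lemma distSeq_bddAbove (f : X → X) (x y : X) (δ : ℝ) :
    IsBoundedUnder (· ≤ ·) atTop (distSeq f x y δ) :=
  isBoundedUnder_of ⟨2, fun m => distSeq_le_two f x y δ m⟩

private lemma distSeq_bddBelow (f : X → X) (x y : X) (δ : ℝ) :
    IsBoundedUnder (· ≥ ·) atTop (distSeq f x y δ) :=
  isBoundedUnder_of ⟨0, fun m => distSeq_nonneg f x y δ m⟩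

private lemma distSeq_mono {f g : X → X} {x y x' y' : X} {δ₁ δ₂ : ℝ}
    (H : ∀ k, dist (f^[k] x) (f^[k] y) < δ₁ → dist (g^[k] x') (g^[k] y') < δ₂) (m : ℕ) :
    distSeq f x y δ₁ m ≤ distSeq g x' y' δ₂ m := by
  unfold distSeq
  have hcard : (((Finset.range (m + 1)).filter (fun k => dist (f^[k] x) (f^[k] y) < δ₁)).card : ℝ)
      ≤ (((Finset.range (m + 1)).filter (fun k => dist (g^[k] x') (g^[k] y') < δ₂)).card : ℝ) := by
    exact_mod_cast Finset.card_le_card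
      (Finset.monotone_filter_right _ (fun k _ hk => H k hk))
  rcases Nat.eq_zero_or_pos m with hm | hm
  · simp [hm]
  · exact (div_le_div_iff_of_pos_right (by exact_mod_cast hm)).mpr hcard

private lemma lowerDist_mono {f g : X → X} {x y x' y' : X} {δ₁ δ₂ : ℝ}
    (H : ∀ k, dist (f^[k] x) (f^[k] y) < δ₁ → dist (g^[k] x') (g^[k] y') < δ₂) :
    lowerDist f x y δ₁ ≤ lowerDist g x' y' δ₂ := by
  rw [lowerDist_eq, lowerDist_eq]
  refine liminf_le_liminf (Eventually.of_forall (distSeq_mono H)) ?_ ?_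
  · exact distSeq_bddBelow f x y δ₁
  · exact (distSeq_bddAbove g x' y' δ₂).isCoboundedUnder_ge

private lemma upperDist_mono {f g : X → X} {x y x' y' : X} {δ₁ δ₂ : ℝ}
    (H : ∀ k, dist (f^[k] x) (f^[k] y) < δ₁ → dist (g^[k] x') (g^[k] y') < δ₂) :
    upperDist f x y δ₁ ≤ upperDist g x' y' δ₂ := by
  rw [upperDist_eq, upperDist_eq]
  refine limsup_le_limsup (Eventually.of_forall (distSeq_mono H)) ?_ ?_
  · exact (distSeq_bddBelow f x y δ₁).isCoboundedUnder_le
  · exact distSeq_bddAbove g x' y' δ₂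

private lemma iterate_conj {f g : X → X} (h : X ≃ₜ X)
    (hconj : ∀ x : X, f x = h (g (h.symm x))) (k : ℕ) (x : X) :
    f^[k] x = h (g^[k] (h.symm x)) := by
  induction k generalizing x with
  | zero => simp
  | succ n ih =>
    rw [Function.iterate_succ_apply, hconj, ih, Homeomorph.symm_apply_apply,
      Function.iterate_succ_apply]

private lemma key [CompactSpace X] {f g : X → X} (h : X ≃ₜ X)
    (hconj : ∀ x : X, f x = h (g (h.symm x))) :
    ∀ u v : X, DC2HalfPair f u v → DC2HalfPair g (h.symm u) (h.symm v) := by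
  intro u v ⟨c, s, hc, hs, hcs⟩
  -- uniform continuity of h and h.symm
  have uch : UniformContinuous h := CompactSpace.uniformContinuous_of_continuous h.continuous
  have uchs : UniformContinuous h.symm :=
    CompactSpace.uniformContinuous_of_continuous h.symm.continuous
  rw [Metric.uniformContinuous_iff] at uch uchs
  obtain ⟨s', hs', hhs'⟩ := uch (s / 2) (by linarith)
  refine ⟨c, s', hc, hs', fun δ hδ hδs' => ?_⟩
  constructor
  · -- lowerDist g δ ≤ lowerDist f (s/2) < c
    have H : ∀ k, dist (g^[k] (h.symm u)) (g^[k] (h.symm v)) < δ →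
        dist (f^[k] u) (f^[k] v) < s / 2 := by
      intro k hk
      rw [iterate_conj h hconj, iterate_conj h hconj]
      exact hhs' (lt_trans hk hδs')
    calc lowerDist g (h.symm u) (h.symm v) δ ≤ lowerDist f u v (s / 2) := lowerDist_mono H
    _ < c := (hcs (s / 2) (by linarith) (by linarith)).1
  · -- c < upperDist f ε ≤ upperDist g δ
    obtain ⟨ε₁, hε₁, hhε₁⟩ := uchs δ hδ
    set ε := min ε₁ (s / 2) with hε
    have hεpos : 0 < ε := lt_min hε₁ (by linarith)
    have hεs : ε < s := lt_of_le_of_lt (min_le_right _ _) (by linarith)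
    have H : ∀ k, dist (f^[k] u) (f^[k] v) < ε →
        dist (g^[k] (h.symm u)) (g^[k] (h.symm v)) < δ := by
      intro k hk
      rw [iterate_conj h hconj, iterate_conj h hconj] at hk
      have := hhε₁ (lt_of_lt_of_le hk (min_le_left _ _))
      simpa using this
    calc c < upperDist f u v ε := (hcs ε hεpos hεs).2
    _ ≤ upperDist g (h.symm u) (h.symm v) δ := upperDist_mono H

private lemma chaotic_transfer [CompactSpace X] {f g : X → X} (h : X ≃ₜ X)
    (hconj : ∀ x : X, f x = h (g (h.symm x))) :
    DC2HalfChaotic f → DC2HalfChaotic g := by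
  intro ⟨S, hS, hpairs⟩
  refine ⟨h.symm '' S, ?_, ?_⟩
  · intro hcount
    apply hS
    have : (h '' (h.symm '' S)).Countable := hcount.image h
    simpa [Set.image_image] using this
  · rintro _ ⟨x, hx, rfl⟩ _ ⟨y, hy, rfl⟩ hne
    exact key h hconj x y (hpairs x hx y hy (fun e => hne (by rw [e])))

end aux

/-- DC2½ is preserved by topological conjugacy: if `f = h ∘ g ∘ h⁻¹` and `(u,v)` is
distributionally scrambled of type 2½ for `f`, then `(h⁻¹ u, h⁻¹ v)` is distributionally
scrambled of type 2½ for `g`; in particular `f` is DC2½ chaotic iff `g` is. -/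
theorem stmt_5 {X : Type*} [MetricSpace X] [CompactSpace X] (f g : X → X)
    (hf : Continuous f) (hg : Continuous g) (h : X ≃ₜ X)
    (hconj : ∀ x : X, f x = h (g (h.symm x))) :
    (∀ u v : X, DC2HalfPair f u v → DC2HalfPair g (h.symm u) (h.symm v)) ∧
    (DC2HalfChaotic f ↔ DC2HalfChaotic g) := by
  have hconj' : ∀ x : X, g x = h.symm (f (h x)) := by
    intro x
    rw [hconj (h x)]
    simp
  exact ⟨key h hconj, ⟨chaotic_transfer h hconj, chaotic_transfer (h.symm)
    (by simpa using hconj')⟩⟩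
end

section
/- With p as above, define η^i = ∑_{j=1}^{i} p(j) mod 1. Suppose the sequence (n_m) satisfies lim_{m→∞} s_m/n_m = 0 and lim_{m→∞} 2^m/n_m = 0, where s_m = ∑_{i=0}^{m-1} n_i. Then letting U_k = #{0 ≤ i ≤ s_k + n_k : η^i = 0} and L_k = #{0 ≤ i ≤ s_k + n_k : η^i = 1/2}, one has L_{2k} ≥ n_{2k} − 2^{2k} and U_{2k+1} ≥ n_{2k+1} − 2^{2k+1} for all k ≥ 0, and consequently limsup_k U_{2k+1}/(s_{2k+1}+n_{2k+1}) = 1 and liminf over even indices of L-complement density: lim_k (n_{2k} − 2^{2k})/(s_{2k}+n_{2k}) = 1. -/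
/-- With `p` the blockwise rotation-angle function and `η^i = ∑_{j=1}^i p(j) mod 1`,
assuming `s_m/n_m → 0` and `2^m/n_m → 0`:
`L_{2k} ≥ n_{2k} − 2^{2k}`, `U_{2k+1} ≥ n_{2k+1} − 2^{2k+1}`, and consequently
`limsup_k U_{2k+1}/(s_{2k+1}+n_{2k+1}) = 1` and `(n_{2k} − 2^{2k})/(s_{2k}+n_{2k}) → 1`,
where `U_k` (resp. `L_k`) counts `0 ≤ i ≤ s_k + n_k` with `η^i = 0` (resp. `η^i = 1/2`). -/
theorem stmt_15 (n : ℕ → ℕ) (hn : StrictMono n) (h0 : 0 < n 0) (p : ℕ → ℝ)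
    (hp1 : ∀ m k : ℕ, (∑ i ∈ Finset.range m, n i) < k → k ≤ (∑ i ∈ Finset.range m, n i) + 2 ^ m →
      p k = 1 / 2 ^ (m + 1))
    (hp2 : ∀ m k : ℕ, (∑ i ∈ Finset.range m, n i) + 2 ^ m < k →
      k ≤ (∑ i ∈ Finset.range m, n i) + n m → p k = 0)
    (hs : Filter.Tendsto (fun m : ℕ => ((∑ i ∈ Finset.range m, n i : ℕ) : ℝ) / n m)
      Filter.atTop (nhds 0))
    (h2 : Filter.Tendsto (fun m : ℕ => ((2 : ℝ) ^ m) / n m) Filter.atTop (nhds 0))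
    (η : ℕ → ℝ) (hη : ∀ i : ℕ, η i = Int.fract (∑ j ∈ Finset.Icc 1 i, p j))
    (U L : ℕ → ℕ)
    (hU : ∀ k : ℕ, U k =
      ((Finset.range ((∑ i ∈ Finset.range k, n i) + n k + 1)).filter (fun i => η i = 0)).card)
    (hL : ∀ k : ℕ, L k =
      ((Finset.range ((∑ i ∈ Finset.range k, n i) + n k + 1)).filter
        (fun i => η i = 1 / 2)).card) :
    (∀ k : ℕ, (n (2 * k) : ℝ) - 2 ^ (2 * k) ≤ L (2 * k)) ∧
    (∀ k : ℕ, (n (2 * k + 1) : ℝ) - 2 ^ (2 * k + 1) ≤ U (2 * k + 1)) ∧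
    Filter.limsup
      (fun k : ℕ => (U (2 * k + 1) : ℝ) /
        ((∑ i ∈ Finset.range (2 * k + 1), n i : ℕ) + n (2 * k + 1)))
      Filter.atTop = 1 ∧
    Filter.Tendsto
      (fun k : ℕ => ((n (2 * k) : ℝ) - 2 ^ (2 * k)) /
        ((∑ i ∈ Finset.range (2 * k), n i : ℕ) + n (2 * k)))
      Filter.atTop (nhds 1) := by

  classical
  set s : ℕ → ℕ := fun m => ∑ i ∈ Finset.range m, n i with hs_def
  have hsum_eq : ∀ m, (∑ i ∈ Finset.range m, n i) = s m := fun _ => rfl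
  have hs_succ : ∀ m, s (m + 1) = s m + n m := fun m => Finset.sum_range_succ n m
  have hn1 : ∀ m, 1 ≤ n m := fun m => h0.trans_le (hn.monotone (Nat.zero_le m))
  -- 2^m ≤ n m, by contradiction using hp1 at m and m+1
  have h2n : ∀ m, 2 ^ m ≤ n m := by
    intro m
    by_contra hcon
    push_neg at hcon
    have hk1 : p (s m + n m + 1) = 1 / 2 ^ (m + 1) := by
      apply hp1 m <;> (simp only [hsum_eq]; omega)
    have hk2 : p (s m + n m + 1) = 1 / 2 ^ (m + 2) := by
      have := hp1 (m + 1) (s m + n m + 1) (by simp only [hsum_eq, hs_succ]; omega)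
        (by simp only [hsum_eq, hs_succ]; omega)
      simpa using this
    rw [hk1] at hk2
    have hpow : (0:ℝ) < 2 ^ (m + 1) := by positivity
    rw [pow_succ (2:ℝ) (m+1)] at hk2
    rw [div_eq_div_iff (by positivity) (by positivity)] at hk2
    nlinarith [hpow]
  -- sum up to s m equals m/2
  have hT : ∀ m, (∑ j ∈ Finset.Ioc 0 (s m), p j) = (m : ℝ) / 2 := by
    intro m
    induction m with
    | zero => simp [hs_def]
    | succ m ih =>
      have hle1 : s m ≤ s m + 2 ^ m := Nat.le_add_right _ _
      have hle2 : s m + 2 ^ m ≤ s (m + 1) := by rw [hs_succ]; exact Nat.add_le_add_left (h2n m) _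
      have e1 : (∑ j ∈ Finset.Ioc 0 (s m), p j) + ∑ j ∈ Finset.Ioc (s m) (s m + 2 ^ m), p j
          = ∑ j ∈ Finset.Ioc 0 (s m + 2 ^ m), p j :=
        Finset.sum_Ioc_consecutive p (Nat.zero_le _) hle1
      have e2 : (∑ j ∈ Finset.Ioc 0 (s m + 2 ^ m), p j)
            + ∑ j ∈ Finset.Ioc (s m + 2 ^ m) (s (m + 1)), p j
          = ∑ j ∈ Finset.Ioc 0 (s (m + 1)), p j :=
        Finset.sum_Ioc_consecutive p (Nat.zero_le _) hle2
      have emid : (∑ j ∈ Finset.Ioc (s m) (s m + 2 ^ m), p j) = 1 / 2 := by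
        have hc : ∀ j ∈ Finset.Ioc (s m) (s m + 2 ^ m), p j = 1 / 2 ^ (m + 1) := by
          intro j hj
          rw [Finset.mem_Ioc] at hj
          exact hp1 m j hj.1 hj.2
        rw [Finset.sum_congr rfl hc, Finset.sum_const, Nat.card_Ioc]
        simp only [Nat.add_sub_cancel_left, nsmul_eq_mul]
        rw [Nat.cast_pow, pow_succ]
        push_cast
        rw [mul_one_div, div_eq_div_iff (by positivity) (by norm_num)]
        ring
      have elast : (∑ j ∈ Finset.Ioc (s m + 2 ^ m) (s (m + 1)), p j) = 0 := by
        apply Finset.sum_eq_zero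
        intro j hj
        rw [Finset.mem_Ioc] at hj
        exact hp2 m j hj.1 (by rw [hs_succ] at hj; exact hj.2)
      rw [← e2, ← e1, ih, emid, elast]
      push_cast
      ring
  -- flat part : for s m + 2^m ≤ i ≤ s m + n m, cumulative sum = (m+1)/2
  have hflat : ∀ m i : ℕ, s m + 2 ^ m ≤ i → i ≤ s m + n m →
      (∑ j ∈ Finset.Icc 1 i, p j) = ((m : ℝ) + 1) / 2 := by
    intro m i hi1 hi2
    rw [show Finset.Icc 1 i = Finset.Ioc 0 i from rfl]
    have hle1 : s m ≤ s m + 2 ^ m := Nat.le_add_right _ _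
    have e1 : (∑ j ∈ Finset.Ioc 0 (s m), p j) + ∑ j ∈ Finset.Ioc (s m) (s m + 2 ^ m), p j
        = ∑ j ∈ Finset.Ioc 0 (s m + 2 ^ m), p j :=
      Finset.sum_Ioc_consecutive p (Nat.zero_le _) hle1
    have e2 : (∑ j ∈ Finset.Ioc 0 (s m + 2 ^ m), p j)
          + ∑ j ∈ Finset.Ioc (s m + 2 ^ m) i, p j
        = ∑ j ∈ Finset.Ioc 0 i, p j :=
      Finset.sum_Ioc_consecutive p (Nat.zero_le _) hi1
    have emid : (∑ j ∈ Finset.Ioc (s m) (s m + 2 ^ m), p j) = 1 / 2 := by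
      have hc : ∀ j ∈ Finset.Ioc (s m) (s m + 2 ^ m), p j = 1 / 2 ^ (m + 1) := by
        intro j hj
        rw [Finset.mem_Ioc] at hj
        exact hp1 m j hj.1 hj.2
      rw [Finset.sum_congr rfl hc, Finset.sum_const, Nat.card_Ioc]
      simp only [Nat.add_sub_cancel_left, nsmul_eq_mul]
      rw [Nat.cast_pow, pow_succ]
      push_cast
      rw [mul_one_div, div_eq_div_iff (by positivity) (by norm_num)]
      ring
    have elast : (∑ j ∈ Finset.Ioc (s m + 2 ^ m) i, p j) = 0 := by
      apply Finset.sum_eq_zero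
      intro j hj
      rw [Finset.mem_Ioc] at hj
      exact hp2 m j hj.1 (hj.2.trans hi2)
    rw [← e2, ← e1, hT m, emid, elast]
    ring
  -- η on flat part of even blocks is 1/2, on odd blocks is 0
  have hη_even : ∀ k i : ℕ, s (2 * k) + 2 ^ (2 * k) ≤ i → i ≤ s (2 * k) + n (2 * k) →
      η i = 1 / 2 := by
    intro k i hi1 hi2
    rw [hη i, hflat (2 * k) i hi1 hi2]
    have : ((2 * k : ℕ) : ℝ) + 1 = 2 * (k : ℝ) + 1 := by push_cast; ring
    rw [this, show (2 * (k : ℝ) + 1) / 2 = (k : ℤ) + 1 / 2 by push_cast; ring,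
      Int.fract_intCast_add, Int.fract_eq_self.mpr (by norm_num)]
  have hη_odd : ∀ k i : ℕ, s (2 * k + 1) + 2 ^ (2 * k + 1) ≤ i → i ≤ s (2 * k + 1) + n (2 * k + 1) →
      η i = 0 := by
    intro k i hi1 hi2
    rw [hη i, hflat (2 * k + 1) i hi1 hi2]
    rw [show ((2 * k + 1 : ℕ) : ℝ) + 1 = ((k + 1 : ℤ) : ℝ) * 2 by push_cast; ring]
    rw [mul_div_assoc, div_self (by norm_num), mul_one, Int.fract_intCast]
  -- counting lower bounds (in ℕ)
  have hLnat : ∀ k, n (2 * k) - 2 ^ (2 * k) + 1 ≤ L (2 * k) := by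
    intro k
    rw [hL (2 * k)]
    simp only [hsum_eq]
    have hsub : Finset.Icc (s (2 * k) + 2 ^ (2 * k)) (s (2 * k) + n (2 * k)) ⊆
        (Finset.range (s (2 * k) + n (2 * k) + 1)).filter (fun i => η i = 1 / 2) := by
      intro i hi
      rw [Finset.mem_Icc] at hi
      rw [Finset.mem_filter, Finset.mem_range]
      exact ⟨by omega, hη_even k i hi.1 hi.2⟩
    have h2k := h2n (2 * k)
    have := Finset.card_le_card hsub
    rw [Nat.card_Icc] at this
    omega
  have hUnat : ∀ k, n (2 * k + 1) - 2 ^ (2 * k + 1) + 1 ≤ U (2 * k + 1) := by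
    intro k
    rw [hU (2 * k + 1)]
    simp only [hsum_eq]
    have hsub : Finset.Icc (s (2 * k + 1) + 2 ^ (2 * k + 1)) (s (2 * k + 1) + n (2 * k + 1)) ⊆
        (Finset.range (s (2 * k + 1) + n (2 * k + 1) + 1)).filter (fun i => η i = 0) := by
      intro i hi
      rw [Finset.mem_Icc] at hi
      rw [Finset.mem_filter, Finset.mem_range]
      exact ⟨by omega, hη_odd k i hi.1 hi.2⟩
    have h2k := h2n (2 * k + 1)
    have := Finset.card_le_card hsub
    rw [Nat.card_Icc] at this
    omega
  have hLreal : ∀ k : ℕ, (n (2 * k) : ℝ) - 2 ^ (2 * k) ≤ L (2 * k) := by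
    intro k
    have h1 := hLnat k
    have h2 := h2n (2 * k)
    have : ((n (2 * k) - 2 ^ (2 * k) + 1 : ℕ) : ℝ) ≤ (L (2 * k) : ℝ) := by exact_mod_cast h1
    rw [Nat.cast_add, Nat.cast_sub h2] at this
    push_cast at this ⊢
    linarith
  have hUreal : ∀ k : ℕ, (n (2 * k + 1) : ℝ) - 2 ^ (2 * k + 1) ≤ U (2 * k + 1) := by
    intro k
    have h1 := hUnat k
    have h2 := h2n (2 * k + 1)
    have : ((n (2 * k + 1) - 2 ^ (2 * k + 1) + 1 : ℕ) : ℝ) ≤ (U (2 * k + 1) : ℝ) := by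
      exact_mod_cast h1
    rw [Nat.cast_add, Nat.cast_sub h2] at this
    push_cast at this ⊢
    linarith
  -- positivity facts
  have hnpos : ∀ m, (0 : ℝ) < n m := fun m => by exact_mod_cast hn1 m
  have hdpos : ∀ m, (0 : ℝ) < (s m : ℝ) + n m := fun m => by
    have h1 := hnpos m
    have h2 : (0 : ℝ) ≤ (s m : ℝ) := Nat.cast_nonneg _
    linarith
  -- the general ratio tends to 1
  have hg : Filter.Tendsto (fun m : ℕ => ((n m : ℝ) - 2 ^ m) / ((s m : ℝ) + n m))
      Filter.atTop (nhds 1) := by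
    have heq : ∀ m : ℕ, ((n m : ℝ) - 2 ^ m) / ((s m : ℝ) + n m)
        = (1 - 2 ^ m / n m) * (1 + (s m : ℝ) / n m)⁻¹ := by
      intro m
      have h1 : (n m : ℝ) ≠ 0 := (hnpos m).ne'
      have h2 : (s m : ℝ) + n m ≠ 0 := (hdpos m).ne'
      rw [show (1 : ℝ) - 2 ^ m / n m = ((n m : ℝ) - 2 ^ m) / n m by field_simp,
        show (1 : ℝ) + (s m : ℝ) / n m = ((s m : ℝ) + n m) / n m by field_simp; ring,
        inv_div, div_mul_div_comm, mul_comm ((n m : ℝ)) ((s m : ℝ) + n m),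
        mul_div_mul_right _ _ h1]
    simp only [heq]
    have t1 : Filter.Tendsto (fun m : ℕ => 1 - (2 : ℝ) ^ m / n m) Filter.atTop (nhds 1) := by
      simpa using (tendsto_const_nhds (x := (1:ℝ)) (f := Filter.atTop (α := ℕ))).sub h2
    have t2 : Filter.Tendsto (fun m : ℕ => (1 + (s m : ℝ) / n m)⁻¹) Filter.atTop (nhds 1) := by
      have hs' : Filter.Tendsto (fun m : ℕ => (s m : ℝ) / n m) Filter.atTop (nhds 0) := hs
      have : Filter.Tendsto (fun m : ℕ => 1 + (s m : ℝ) / n m) Filter.atTop (nhds 1) := by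
        simpa using (tendsto_const_nhds (x := (1:ℝ)) (f := Filter.atTop (α := ℕ))).add hs' 
      simpa using this.inv₀ one_ne_zero
    simpa using t1.mul t2
  have hdouble : Filter.Tendsto (fun k : ℕ => 2 * k) Filter.atTop Filter.atTop := by
    apply Filter.tendsto_atTop_atTop.mpr
    intro b
    exact ⟨b, fun a ha => by omega⟩
  have hodd : Filter.Tendsto (fun k : ℕ => 2 * k + 1) Filter.atTop Filter.atTop := by
    apply Filter.tendsto_atTop_atTop.mpr
    intro b
    exact ⟨b, fun a ha => by omega⟩
  refine ⟨hLreal, hUreal, ?_, ?_⟩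
  · -- limsup part
    have hlower : Filter.Tendsto
        (fun k : ℕ => ((n (2 * k + 1) : ℝ) - 2 ^ (2 * k + 1)) / ((s (2 * k + 1) : ℝ) + n (2 * k + 1)))
        Filter.atTop (nhds 1) := hg.comp hodd
    have hupper : Filter.Tendsto
        (fun k : ℕ => 1 + ((s (2 * k + 1) : ℝ) + n (2 * k + 1))⁻¹) Filter.atTop (nhds 1) := by
      have hden : Filter.Tendsto (fun k : ℕ => (s (2 * k + 1) : ℝ) + n (2 * k + 1))
          Filter.atTop Filter.atTop := by
        apply Filter.tendsto_atTop_mono (fun k => ?_) tendsto_natCast_atTop_atTop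
        have : k ≤ n (2 * k + 1) := le_trans (by omega) (hn.le_apply)
        have h1 : (k : ℝ) ≤ n (2 * k + 1) := by exact_mod_cast this
        have h2 : (0 : ℝ) ≤ (s (2 * k + 1) : ℝ) := Nat.cast_nonneg _
        linarith
      have := hden.inv_tendsto_atTop
      simpa using (tendsto_const_nhds (x := (1:ℝ)) (f := Filter.atTop (α := ℕ))).add this
    have hmain : Filter.Tendsto
        (fun k : ℕ => (U (2 * k + 1) : ℝ) / ((s (2 * k + 1) : ℝ) + n (2 * k + 1)))
        Filter.atTop (nhds 1) := by
      apply tendsto_of_tendsto_of_tendsto_of_le_of_le hlower hupper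
      · intro k
        have hd := hdpos (2 * k + 1)
        exact div_le_div_of_nonneg_right (hUreal k) hd.le
      · intro k
        have hd := hdpos (2 * k + 1)
        have hUle : (U (2 * k + 1) : ℝ) ≤ (s (2 * k + 1) : ℝ) + n (2 * k + 1) + 1 := by
          have : U (2 * k + 1) ≤ s (2 * k + 1) + n (2 * k + 1) + 1 := by
            rw [hU (2 * k + 1)]
            calc ((Finset.range (s (2 * k + 1) + n (2 * k + 1) + 1)).filter
                  (fun i => η i = 0)).card
                ≤ (Finset.range (s (2 * k + 1) + n (2 * k + 1) + 1)).card :=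
                  Finset.card_filter_le _ _
              _ = s (2 * k + 1) + n (2 * k + 1) + 1 := Finset.card_range _
          exact_mod_cast this
        rw [div_le_iff₀ hd]
        have : (1 + ((s (2 * k + 1) : ℝ) + n (2 * k + 1))⁻¹) * ((s (2 * k + 1) : ℝ) + n (2 * k + 1))
            = (s (2 * k + 1) : ℝ) + n (2 * k + 1) + 1 := by
          field_simp
        rw [this]
        exact hUle
    exact hmain.limsup_eq
  · exact hg.comp hdouble
end

section
/- Consider the real sequence a_n with blocks indexed by k: for n with l_{k−1} < n ≤ l_k where l_k = ∑_{i=1}^k i^i, set a_n to be an angle advanced by step 1/k within the block, starting from 0 at n = l_{k−1} (so the k-th block repeats the cycle 0, 1/k, 2/k, …, (k−1)/k exactly k^{k−1} times). Fix δ ∈ (0, 1/2) and a target angle φ on the circle. Then the asymptotic density of {n : ρ(a_n, φ) < δ} exists and equals 2δ, where ρ is the circle metric. -/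
/-- The circle metric on `ℝ/ℤ` (for representatives in `[0,1)`). -/
noncomputable def circleDist (a b : ℝ) : ℝ := min |a - b| (1 - |a - b|)

/-- Partial sums `l_k = ∑_{i=1}^k i^i` marking the block boundaries. -/
def blockEnd (k : ℕ) : ℕ := ∑ i ∈ Finset.Icc 1 k, i ^ i

set_option maxHeartbeats 1000000

namespace Stmt16

lemma blockEnd_zero : blockEnd 0 = 0 := by simp [blockEnd]

lemma blockEnd_succ (k : ℕ) : blockEnd (k+1) = blockEnd k + (k+1)^(k+1) := by
  rw [blockEnd, blockEnd, Finset.sum_Icc_succ_top (by omega)]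

lemma blockEnd_mono : Monotone blockEnd := by
  apply monotone_nat_of_le_succ
  intro k; rw [blockEnd_succ]; exact Nat.le_add_right _ _

lemma self_le_blockEnd (N : ℕ) : N ≤ blockEnd N := by
  induction N with
  | zero => simp [blockEnd_zero]
  | succ n ih =>
    rw [blockEnd_succ]
    have : 1 ≤ (n+1)^(n+1) := Nat.one_le_pow _ _ (by omega)
    omega

lemma pow_le_blockEnd (K : ℕ) (hK : 1 ≤ K) : K ^ K ≤ blockEnd K := by
  cases K with
  | zero => omega
  | succ k => rw [blockEnd_succ]; exact Nat.le_add_left _ _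

lemma blockEnd_sub_one (k : ℕ) (hk : 1 ≤ k) :
    blockEnd k = blockEnd (k-1) + k ^ k := by
  obtain ⟨n, rfl⟩ : ∃ n, k = n + 1 := ⟨k - 1, by omega⟩
  simp [blockEnd_succ]

/-! ### error sum -/

def eSum (K : ℕ) : ℕ := ∑ k ∈ Finset.Icc 1 K, k ^ (k - 1)

lemma eSum_zero : eSum 0 = 0 := by simp [eSum]

lemma eSum_succ (K : ℕ) : eSum (K+1) = eSum K + (K+1)^K := by
  rw [eSum, eSum, Finset.sum_Icc_succ_top (by omega)]
  simp

lemma eSum_le (M : ℕ) (hM : 1 ≤ M) : eSum M ≤ 2 * M ^ (M-1) := by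
  induction M with
  | zero => omega
  | succ n ih =>
    rcases Nat.eq_or_lt_of_le hM with h | h
    · simp [← h, eSum_succ, eSum_zero]
    · have hn : 1 ≤ n := by omega
      have h1 := ih hn
      rw [eSum_succ]
      have h2 : 2 * n ^ (n-1) ≤ (n+1)^n := by
        have : n ^ (n-1) ≤ (n+1) ^ (n-1) := Nat.pow_le_pow_left (by omega) _
        calc 2 * n ^ (n-1) ≤ (n+1) * (n+1)^(n-1) :=
              Nat.mul_le_mul (by omega) this
          _ = (n+1)^(n-1+1) := by ring
          _ = (n+1)^n := by rw [Nat.sub_add_cancel hn]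
      simp only [Nat.add_sub_cancel]
      calc eSum n + (n+1)^n ≤ 2 * n^(n-1) + (n+1)^n := by omega
        _ ≤ (n+1)^n + (n+1)^n := by omega
        _ = 2 * (n+1)^n := by ring

/-! ### Kof -/

lemma exists_blockEnd (N : ℕ) : ∃ K, N ≤ blockEnd K := ⟨N, self_le_blockEnd N⟩

def Kof (N : ℕ) : ℕ := Nat.find (exists_blockEnd N)

lemma le_blockEnd_Kof (N : ℕ) : N ≤ blockEnd (Kof N) := Nat.find_spec (exists_blockEnd N)

lemma blockEnd_lt_of_lt_Kof {N j : ℕ} (h : j < Kof N) : blockEnd j < N :=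
  Nat.lt_of_not_le (Nat.find_min (exists_blockEnd N) h)

lemma le_Kof {N K₀ : ℕ} (hK₀ : 1 ≤ K₀) (h : blockEnd (K₀ - 1) < N) : K₀ ≤ Kof N := by
  have : K₀ - 1 < Kof N := by
    unfold Kof
    rw [Nat.lt_find_iff]
    intro m hm hNm
    have := blockEnd_mono hm
    omega
  omega

/-! ### periodic window sums -/

lemma window_const (f : ℕ → ℕ) (k : ℕ) (hf : ∀ i, f (i + k) = f i) (a : ℕ) :
    ∑ i ∈ Finset.range k, f (a + i) = ∑ i ∈ Finset.range k, f i := by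
  induction a with
  | zero => simp
  | succ a ih =>
    rw [← ih]
    have h1 : ∑ i ∈ Finset.range (k+1), f (a + i)
        = (∑ i ∈ Finset.range k, f (a + i)) + f (a + k) :=
      Finset.sum_range_succ (fun i => f (a + i)) k
    have h2 : ∑ i ∈ Finset.range (k+1), f (a + i)
        = (∑ i ∈ Finset.range k, f (a + (i+1))) + f a := by
      simpa using Finset.sum_range_succ' (fun i => f (a + i)) k
    have h3 : ∑ i ∈ Finset.range k, f (a + 1 + i)
        = ∑ i ∈ Finset.range k, f (a + (i + 1)) := by
      apply Finset.sum_congr rfl; intro i _; congr 1; omega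
    rw [h3]
    have h4 : f (a + k) = f a := hf a
    have h5 : (∑ i ∈ Finset.range k, f (a + (i+1))) + f a
        = (∑ i ∈ Finset.range k, f (a + i)) + f a := by
      rw [← h2, h1, h4]
    exact Nat.add_right_cancel h5

lemma window_split (f : ℕ → ℕ) (a x y : ℕ) :
    ∑ i ∈ Finset.range (x+y), f (a+i)
      = ∑ i ∈ Finset.range x, f (a+i) + ∑ i ∈ Finset.range y, f (a+x+i) := by
  rw [Finset.sum_range_add]
  congr 1
  apply Finset.sum_congr rfl; intro i _; congr 1; omega

lemma periodic_window0 (f : ℕ → ℕ) (k : ℕ) (hf : ∀ i, f (i + k) = f i) (a q : ℕ) :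
    ∑ i ∈ Finset.range (q*k), f (a+i) = q * (∑ i ∈ Finset.range k, f i) := by
  induction q with
  | zero => simp
  | succ q ih =>
    have h : (q+1)*k = q*k + k := by ring
    rw [h, window_split f a (q*k) k, ih, window_const f k hf (a + q*k)]
    ring

lemma periodic_window (f : ℕ → ℕ) (k : ℕ) (hf : ∀ i, f (i + k) = f i) (a q s : ℕ) :
    ∑ i ∈ Finset.range (q*k+s), f (a+i)
      = q * (∑ i ∈ Finset.range k, f i) + ∑ i ∈ Finset.range s, f (a + q*k + i) := by
  rw [window_split f a (q*k) s, periodic_window0 f k hf a q]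

lemma partial_le_cycle (f : ℕ → ℕ) (k : ℕ) (hf : ∀ i, f (i + k) = f i) (b s : ℕ)
    (hs : s ≤ k) :
    ∑ i ∈ Finset.range s, f (b + i) ≤ ∑ i ∈ Finset.range k, f i := by
  calc ∑ i ∈ Finset.range s, f (b + i) ≤ ∑ i ∈ Finset.range k, f (b + i) :=
        Finset.sum_le_sum_of_subset (Finset.range_subset_range.mpr hs)
    _ = _ := window_const f k hf b


/-! ### circleDist characterization -/

section Analytic

variable {δ φ : ℝ}

lemma abs_scale {k : ℕ} (hk : 1 ≤ k) (r : ℕ) (m : ℤ) :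
    |(r:ℝ) - k*φ - k*m| < δ*k ↔ |(r:ℝ)/k - φ - m| < δ := by
  have hk' : (0:ℝ) < k := by exact_mod_cast hk
  have h1 : (r:ℝ) - k*φ - k*m = k * ((r:ℝ)/k - φ - m) := by
    field_simp
  rw [h1, abs_mul, abs_of_pos hk']
  rw [mul_comm δ (k:ℝ)]
  exact mul_lt_mul_iff_right₀ hk'

lemma mem_iff (hδ0 : 0 < δ) (hδ2 : δ < 1/2) (hφ0 : 0 ≤ φ) (hφ1 : φ < 1)
    {k r : ℕ} (hk : 1 ≤ k) (hr : r < k) :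
    circleDist ((r:ℝ)/k) φ < δ ↔ ∃ m : ℤ, |(r:ℝ) - k*φ - k*m| < δ*k := by
  have hk' : (0:ℝ) < k := by exact_mod_cast hk
  have hx0 : (0:ℝ) ≤ (r:ℝ)/k := by positivity
  have hx1 : (r:ℝ)/k < 1 := by
    rw [div_lt_one hk']; exact_mod_cast hr
  set d : ℝ := (r:ℝ)/k - φ with hd
  have hd1 : -1 < d := by simp only [hd]; linarith
  have hd2 : d < 1 := by simp only [hd]; linarith
  simp only [abs_scale hk]
  rw [circleDist, min_lt_iff]
  constructor
  · rintro (h | h)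
    · exact ⟨0, by simpa using h⟩
    · rcases le_or_gt 0 d with hs | hs
      · refine ⟨1, ?_⟩
        rw [abs_of_nonneg hs] at h
        have : |d - 1| = 1 - d := by
          rw [abs_of_nonpos (by linarith)]; ring
        push_cast
        rw [show (r:ℝ)/k - φ - 1 = d - 1 from by rw [hd], this]
        linarith
      · refine ⟨-1, ?_⟩
        rw [abs_of_neg hs] at h
        have : |d + 1| = d + 1 := abs_of_nonneg (by linarith)
        push_cast
        rw [show (r:ℝ)/k - φ - (-1) = d + 1 from by rw [hd]; ring, this]
        linarith
  · rintro ⟨m, hm⟩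
    have hdm : |d - m| < δ := by
      rw [show (r:ℝ)/k - φ - m = d - m from by rw [hd]] at hm
      exact hm
    have hmb : (-1:ℤ) ≤ m ∧ m ≤ 1 := by
      rw [abs_lt] at hdm
      constructor
      · by_contra hc
        push_neg at hc
        have : m ≤ -2 := by omega
        have : (m:ℝ) ≤ -2 := by exact_mod_cast this
        linarith
      · by_contra hc
        push_neg at hc
        have : 2 ≤ m := by omega
        have : (2:ℝ) ≤ (m:ℝ) := by exact_mod_cast this
        linarith
    obtain ⟨hm1, hm2⟩ := hmb
    interval_cases m
    · right
      rw [abs_lt] at hdm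
      push_cast at hdm
      have h2 : -d ≤ |d| := neg_le_abs d
      linarith [hdm.2]
    · left
      simpa using hdm
    · right
      rw [abs_lt] at hdm
      push_cast at hdm
      have h2 : d ≤ |d| := le_abs_self d
      linarith

lemma cycle_card (hδ0 : 0 < δ) (hδ2 : δ < 1/2) (hφ0 : 0 ≤ φ) (hφ1 : φ < 1)
    {k : ℕ} (hk : 1 ≤ k) :
    |((((Finset.range k).filter (fun r : ℕ => circleDist ((r:ℝ)/(k:ℝ)) φ < δ)).card : ℝ))
      - 2*δ*k| ≤ 1 := by
  have hk' : (0:ℝ) < k := by exact_mod_cast hk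
  have hkZ : (0:ℤ) < (k:ℤ) := by exact_mod_cast hk
  set x : ℝ := k*φ - δ*k with hx
  set y : ℝ := k*φ + δ*k with hy
  have hxy : x < y := by simp only [hx, hy]; nlinarith
  have hyx : y - x = 2*δ*k := by simp only [hx, hy]; ring
  have h2dk : 2*δ*k < k := by nlinarith
  have hcard : (Finset.Ioo ⌊x⌋ ⌈y⌉).card
      = ((Finset.range k).filter (fun r : ℕ => circleDist ((r:ℝ)/(k:ℝ)) φ < δ)).card := by
    apply Finset.card_bij (fun j _ => (j % (k:ℤ)).toNat)
    · intro j hj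
      rw [Finset.mem_Ioo] at hj
      have hx' : x < (j:ℝ) := Int.floor_lt.mp hj.1
      have hy' : (j:ℝ) < y := Int.lt_ceil.mp hj.2
      have h1 : (0:ℤ) ≤ j % k := Int.emod_nonneg j (by omega)
      have h2 : j % (k:ℤ) < k := Int.emod_lt_of_pos j hkZ
      have hrk : (j % (k:ℤ)).toNat < k := by omega
      refine Finset.mem_filter.mpr ⟨Finset.mem_range.mpr hrk, ?_⟩
      rw [mem_iff hδ0 hδ2 hφ0 hφ1 hk hrk]
      refine ⟨-(j / k), ?_⟩
      have hInt : ((j % (k:ℤ)).toNat : ℤ) = j - k * (j/k) := by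
        rw [Int.toNat_of_nonneg h1]
        linarith [Int.mul_ediv_add_emod j (k:ℤ)]
      have h3 : (((j % (k:ℤ)).toNat : ℕ) : ℝ) = (j:ℝ) - (k:ℝ)*((j/(k:ℤ) : ℤ):ℝ) := by
        have := congrArg (fun z : ℤ => (z:ℝ)) hInt
        push_cast at this
        exact this
      have key : (((j % (k:ℤ)).toNat : ℕ) : ℝ) - k*φ - k*((-(j / (k:ℤ)) : ℤ) : ℝ)
          = (j:ℝ) - k*φ := by
        rw [h3]; push_cast; ring
      rw [key, abs_lt]
      constructor
      · simp only [hx] at hx'; linarith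
      · simp only [hy] at hy'; linarith
    · intro j1 hj1 j2 hj2 heq
      rw [Finset.mem_Ioo] at hj1 hj2
      have hx1 : x < (j1:ℝ) := Int.floor_lt.mp hj1.1
      have hy1 : (j1:ℝ) < y := Int.lt_ceil.mp hj1.2
      have hx2 : x < (j2:ℝ) := Int.floor_lt.mp hj2.1
      have hy2 : (j2:ℝ) < y := Int.lt_ceil.mp hj2.2
      have hmod : j1 % (k:ℤ) = j2 % (k:ℤ) := by
        have n1 : (0:ℤ) ≤ j1 % k := Int.emod_nonneg j1 (by omega)
        have n2 : (0:ℤ) ≤ j2 % k := Int.emod_nonneg j2 (by omega)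
        omega
      have hdvd : (k:ℤ) ∣ j1 - j2 := by
        have := Int.emod_emod_of_dvd
        exact Int.dvd_of_emod_eq_zero (by rw [Int.sub_emod, hmod]; simp)
      have habs : |j1 - j2| < (k:ℤ) := by
        have hr : |(j1:ℝ) - (j2:ℝ)| < (k:ℝ) := by
          rw [abs_lt]; constructor <;> linarith
        have : ((|j1 - j2| : ℤ) : ℝ) = |(j1:ℝ) - (j2:ℝ)| := by push_cast; rfl
        exact_mod_cast this ▸ hr
      have := Int.eq_zero_of_abs_lt_dvd hdvd habs
      omega
    · intro r hr
      rw [Finset.mem_filter, Finset.mem_range] at hr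
      obtain ⟨m, hm⟩ := (mem_iff hδ0 hδ2 hφ0 hφ1 hk hr.1).mp hr.2
      rw [abs_lt] at hm
      refine ⟨(r:ℤ) - k*m, ?_, ?_⟩
      · rw [Finset.mem_Ioo]
        constructor
        · rw [Int.floor_lt]
          push_cast
          simp only [hx]
          linarith [hm.1]
        · rw [Int.lt_ceil]
          push_cast
          simp only [hy]
          linarith [hm.2]
      · have h1 : ((r:ℤ) - k*m) % k = (r:ℤ) % k := by
          rw [show (r:ℤ) - k*m = (r:ℤ) + k*(-m) from by ring]
          exact Int.add_mul_emod_self_left ..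
        have h2 : (r:ℤ) % k = r := Int.emod_eq_of_lt (by positivity) (by exact_mod_cast hr.1)
        rw [h1, h2]
        simp
  rw [← hcard, Int.card_Ioo]
  have hfl1 : (⌊x⌋:ℝ) ≤ x := Int.floor_le x
  have hfl2 : x < ⌊x⌋ + 1 := Int.lt_floor_add_one x
  have hcl1 : y ≤ ⌈y⌉ := Int.le_ceil y
  have hcl2 : (⌈y⌉:ℝ) < y + 1 := Int.ceil_lt_add_one y
  have hpos : ⌊x⌋ < ⌈y⌉ := by
    have : (⌊x⌋:ℝ) < (⌈y⌉:ℝ) := by linarith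
    exact_mod_cast this
  have hct : ((⌈y⌉ - ⌊x⌋ - 1).toNat : ℝ) = (⌈y⌉:ℝ) - (⌊x⌋:ℝ) - 1 := by
    have h0 : (0:ℤ) ≤ ⌈y⌉ - ⌊x⌋ - 1 := by omega
    have := congrArg (fun z : ℤ => (z:ℝ)) (Int.toNat_of_nonneg h0)
    push_cast at this
    exact_mod_cast this
  rw [hct, abs_le]
  constructor <;> linarith

noncomputable def fk (δ φ : ℝ) (k : ℕ) (i : ℕ) : ℕ :=
  if circleDist (((i % k : ℕ) : ℝ)/(k:ℝ)) φ < δ then 1 else 0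

lemma fk_periodic (k : ℕ) : ∀ i, fk δ φ k (i + k) = fk δ φ k i := by
  intro i; simp [fk, Nat.add_mod_right]

lemma fk_le_one (k i : ℕ) : fk δ φ k i ≤ 1 := by
  rw [fk]; split <;> omega

lemma fk_cycle (k : ℕ) :
    ∑ i ∈ Finset.range k, fk δ φ k i
      = ((Finset.range k).filter (fun r : ℕ => circleDist ((r:ℝ)/(k:ℝ)) φ < δ)).card := by
  rw [Finset.card_filter]
  apply Finset.sum_congr rfl
  intro i hi
  rw [Finset.mem_range] at hi
  simp [fk, Nat.mod_eq_of_lt hi]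

lemma bcount_eq (a : ℕ → ℝ)
    (ha : ∀ k : ℕ, 1 ≤ k → ∀ n : ℕ, blockEnd (k - 1) < n → n ≤ blockEnd k →
      a n = (((n - blockEnd (k - 1)) % k : ℕ) : ℝ) / k)
    (k m : ℕ) (hk : 1 ≤ k) (hm : m ≤ k^k) :
    ((Finset.Ioc (blockEnd (k-1)) (blockEnd (k-1) + m)).filter
        (fun n => circleDist (a n) φ < δ)).card
      = ∑ i ∈ Finset.range m, fk δ φ k (1 + i) := by
  rw [Finset.card_filter]
  have hIoc : Finset.Ioc (blockEnd (k-1)) (blockEnd (k-1) + m)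
      = Finset.Ico (blockEnd (k-1) + 1) (blockEnd (k-1) + 1 + m) := by
    ext n; simp only [Finset.mem_Ioc, Finset.mem_Ico]; omega
  rw [hIoc, Finset.sum_Ico_eq_sum_range]
  have hms : blockEnd (k-1) + 1 + m - (blockEnd (k-1) + 1) = m := by omega
  rw [hms]
  apply Finset.sum_congr rfl
  intro i hi
  rw [Finset.mem_range] at hi
  have hbk : blockEnd k = blockEnd (k-1) + k^k := blockEnd_sub_one k hk
  have han : a (blockEnd (k-1) + 1 + i)
      = (((blockEnd (k-1) + 1 + i - blockEnd (k-1)) % k : ℕ) : ℝ) / k :=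
    ha k hk _ (by omega) (by omega)
  have hsub : blockEnd (k-1) + 1 + i - blockEnd (k-1) = 1 + i := by omega
  rw [han, hsub, fk]

lemma scount_bounds (k m : ℕ) (hk : 1 ≤ k) :
    (m / k) * (∑ i ∈ Finset.range k, fk δ φ k i) ≤ ∑ i ∈ Finset.range m, fk δ φ k (1 + i)
    ∧ ∑ i ∈ Finset.range m, fk δ φ k (1 + i)
      ≤ (m / k) * (∑ i ∈ Finset.range k, fk δ φ k i) + (∑ i ∈ Finset.range k, fk δ φ k i) := by
  have hm' : m = (m / k) * k + m % k := (Nat.div_add_mod' m k).symm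
  have hperiod := fk_periodic (δ := δ) (φ := φ) k
  have hsplit := periodic_window (fk δ φ k) k hperiod 1 (m / k) (m % k)
  rw [← hm'] at hsplit
  have hextra : ∑ i ∈ Finset.range (m % k), fk δ φ k (1 + (m/k)*k + i)
      ≤ ∑ i ∈ Finset.range k, fk δ φ k i :=
    partial_le_cycle (fk δ φ k) k hperiod _ _ (le_of_lt (Nat.mod_lt m (by omega)))
  constructor
  · rw [hsplit]; omega
  · rw [hsplit]; omega

lemma scount_full (k : ℕ) (hk : 1 ≤ k) :
    ∑ i ∈ Finset.range (k^k), fk δ φ k (1 + i)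
      = k^(k-1) * (∑ i ∈ Finset.range k, fk δ φ k i) := by
  have h : k^k = k^(k-1) * k := by
    rw [← pow_succ, Nat.sub_add_cancel hk]
  rw [h]
  exact periodic_window0 (fk δ φ k) k (fk_periodic k) 1 (k^(k-1))

lemma bcount_bound (hδ0 : 0 < δ) (hδ2 : δ < 1/2) (hφ0 : 0 ≤ φ) (hφ1 : φ < 1)
    (a : ℕ → ℝ)
    (ha : ∀ k : ℕ, 1 ≤ k → ∀ n : ℕ, blockEnd (k - 1) < n → n ≤ blockEnd k →
      a n = (((n - blockEnd (k - 1)) % k : ℕ) : ℝ) / k)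
    (k m : ℕ) (hk : 1 ≤ k) (hm : m ≤ k^k) :
    |(((Finset.Ioc (blockEnd (k-1)) (blockEnd (k-1) + m)).filter
        (fun n => circleDist (a n) φ < δ)).card : ℝ) - 2*δ*m|
      ≤ (m:ℝ)/k + k + 1 := by
  rw [bcount_eq a ha k m hk hm]
  set c : ℕ := ∑ i ∈ Finset.range k, fk δ φ k i with hc
  set S : ℕ := ∑ i ∈ Finset.range m, fk δ φ k (1 + i) with hS
  set q : ℕ := m / k with hq
  obtain ⟨hlo, hhi⟩ := scount_bounds (δ := δ) (φ := φ) k m hk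
  have hC : |(c:ℝ) - 2*δ*k| ≤ 1 := by
    rw [hc, fk_cycle]
    exact cycle_card hδ0 hδ2 hφ0 hφ1 hk
  obtain ⟨hc2', hc1'⟩ := abs_le.mp hC
  have hc2 : 2*δ*(k:ℝ) - 1 ≤ c := by linarith
  have hc1 : (c:ℝ) ≤ 2*δ*k + 1 := by linarith
  have hK0 : (0:ℝ) < k := by exact_mod_cast hk
  have hq1 : (k:ℝ) * q ≤ m := by
    have : k * q ≤ m := by rw [hq]; exact Nat.mul_div_le m k
    exact_mod_cast this
  have hq2 : (m:ℝ) < k*q + k := by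
    have h1 : k * q + m % k = m := Nat.div_add_mod m k
    have h2 : m % k < k := Nat.mod_lt m (by omega)
    have : m < k * q + k := by omega
    exact_mod_cast this
  have hSlo : (q:ℝ) * c ≤ S := by exact_mod_cast hlo
  have hShi : (S:ℝ) ≤ q * c + c := by exact_mod_cast hhi
  have hdiv1 : (q:ℝ) ≤ (m:ℝ)/k := by
    rw [le_div_iff₀ hK0]; linarith
  have hdiv2 : (m:ℝ)/k < q + 1 := by
    rw [div_lt_iff₀ hK0]; linarith
  have hcnn : (0:ℝ) ≤ c := Nat.cast_nonneg c
  have hqnn : (0:ℝ) ≤ q := Nat.cast_nonneg q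
  have hmnn : (0:ℝ) ≤ m := Nat.cast_nonneg m
  have hSnn : (0:ℝ) ≤ S := Nat.cast_nonneg S
  have h2dK : 2*δ*k ≤ k := by nlinarith
  rw [abs_le]
  constructor
  · -- lower
    rcases le_or_gt (2*δ*(k:ℝ)) 1 with hcase | hcase
    · have hsm : 2*δ*m ≤ (m:ℝ)/k := by
        rw [le_div_iff₀ hK0]; nlinarith
      linarith
    · have hcpos : (0:ℝ) ≤ 2*δ*k - 1 := by linarith
      have h1 : (q:ℝ) * (2*δ*k - 1) ≤ q * c :=
        mul_le_mul_of_nonneg_left hc2 hqnn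
      have h2 : ((m:ℝ)/k - 1) * (2*δ*k - 1) ≤ q * (2*δ*k - 1) :=
        mul_le_mul_of_nonneg_right (by linarith) hcpos
      have h3 : ((m:ℝ)/k - 1) * (2*δ*k - 1) = 2*δ*m - (m:ℝ)/k - 2*δ*k + 1 := by
        field_simp
        ring
      linarith
  · -- upper
    have h1 : (S:ℝ) ≤ (q+1) * c := by linarith [hShi]
    have h2 : ((q:ℝ)+1) * c ≤ (q+1) * (2*δ*k + 1) :=
      mul_le_mul_of_nonneg_left hc1 (by linarith)
    have h3 : ((q:ℝ)+1) * (2*δ*k + 1) = 2*δ*(k*q) + 2*δ*k + q + 1 := by ring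
    have h4 : 2*δ*((k:ℝ)*q) ≤ 2*δ*m := by nlinarith
    linarith

lemma bcount_full (hδ0 : 0 < δ) (hδ2 : δ < 1/2) (hφ0 : 0 ≤ φ) (hφ1 : φ < 1)
    (a : ℕ → ℝ)
    (ha : ∀ k : ℕ, 1 ≤ k → ∀ n : ℕ, blockEnd (k - 1) < n → n ≤ blockEnd k →
      a n = (((n - blockEnd (k - 1)) % k : ℕ) : ℝ) / k)
    (k : ℕ) (hk : 1 ≤ k) :
    |(((Finset.Ioc (blockEnd (k-1)) (blockEnd (k-1) + k^k)).filter
        (fun n => circleDist (a n) φ < δ)).card : ℝ) - 2*δ*(k^k : ℕ)|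
      ≤ ((k^(k-1) : ℕ) : ℝ) := by
  rw [bcount_eq a ha k (k^k) hk le_rfl, scount_full k hk]
  set c : ℕ := ∑ i ∈ Finset.range k, fk δ φ k i with hc
  have hC : |(c:ℝ) - 2*δ*k| ≤ 1 := by
    rw [hc, fk_cycle]
    exact cycle_card hδ0 hδ2 hφ0 hφ1 hk
  have hpow : ((k^k : ℕ) : ℝ) = ((k^(k-1) : ℕ) : ℝ) * k := by
    push_cast
    rw [show k = (k-1)+1 from by omega]
    rw [pow_succ]
    push_cast
    ring_nf
  have hkey : ((k^(k-1) * c : ℕ) : ℝ) - 2*δ*(k^k : ℕ)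
      = ((k^(k-1):ℕ):ℝ) * ((c:ℝ) - 2*δ*k) := by
    rw [hpow]; push_cast; ring
  rw [hkey, abs_mul, abs_of_nonneg (Nat.cast_nonneg _)]
  calc ((k^(k-1):ℕ):ℝ) * |(c:ℝ) - 2*δ*k| ≤ ((k^(k-1):ℕ):ℝ) * 1 :=
        mul_le_mul_of_nonneg_left hC (Nat.cast_nonneg _)
    _ = _ := by ring

lemma prefix_bound (hδ0 : 0 < δ) (hδ2 : δ < 1/2) (hφ0 : 0 ≤ φ) (hφ1 : φ < 1)
    (a : ℕ → ℝ)
    (ha : ∀ k : ℕ, 1 ≤ k → ∀ n : ℕ, blockEnd (k - 1) < n → n ≤ blockEnd k →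
      a n = (((n - blockEnd (k - 1)) % k : ℕ) : ℝ) / k)
    (K : ℕ) :
    |(((Finset.Ioc 0 (blockEnd K)).filter (fun n => circleDist (a n) φ < δ)).card : ℝ)
      - 2*δ*(blockEnd K)| ≤ (eSum K : ℝ) := by
  induction K with
  | zero => simp [blockEnd_zero, eSum_zero]
  | succ K ih =>
    have hsplit : Finset.Ioc 0 (blockEnd (K+1))
        = Finset.Ioc 0 (blockEnd K) ∪ Finset.Ioc (blockEnd K) (blockEnd (K+1)) :=
      (Finset.Ioc_union_Ioc_eq_Ioc (Nat.zero_le _) (blockEnd_mono (Nat.le_succ K))).symm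
    have hdisjI : Disjoint (Finset.Ioc 0 (blockEnd K)) (Finset.Ioc (blockEnd K) (blockEnd (K+1))) := by
      rw [Finset.disjoint_left]
      intro n h1 h2
      rw [Finset.mem_Ioc] at h1 h2
      omega
    have hdisj := Finset.disjoint_filter_filter
      (p := fun n => circleDist (a n) φ < δ) (q := fun n => circleDist (a n) φ < δ) hdisjI
    rw [hsplit, Finset.filter_union, Finset.card_union_of_disjoint hdisj]
    have hfull := bcount_full hδ0 hδ2 hφ0 hφ1 a ha (K+1) (by omega)
    simp only [Nat.add_sub_cancel] at hfull
    have hsecond : Finset.Ioc (blockEnd K) (blockEnd (K+1))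
        = Finset.Ioc (blockEnd K) (blockEnd K + (K+1)^(K+1)) := by
      rw [blockEnd_succ]
    rw [hsecond]
    have hbe : ((blockEnd (K+1) : ℕ) : ℝ)
        = (blockEnd K : ℝ) + ((K+1)^(K+1) : ℕ) := by
      rw [blockEnd_succ]; push_cast; ring
    have hes : ((eSum (K+1) : ℕ) : ℝ) = (eSum K : ℝ) + ((K+1)^K : ℕ) := by
      rw [eSum_succ]; push_cast; ring
    set C1 : ℕ := ((Finset.Ioc 0 (blockEnd K)).filter (fun n => circleDist (a n) φ < δ)).card
    set C2 : ℕ := ((Finset.Ioc (blockEnd K) (blockEnd K + (K+1)^(K+1))).filter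
      (fun n => circleDist (a n) φ < δ)).card
    rw [hes]
    calc |((C1 + C2 : ℕ) : ℝ) - 2*δ*(blockEnd (K+1))|
        = |((C1:ℝ) - 2*δ*(blockEnd K)) + ((C2:ℝ) - 2*δ*((K+1)^(K+1) : ℕ))| := by
          rw [hbe]; push_cast; ring_nf
      _ ≤ |(C1:ℝ) - 2*δ*(blockEnd K)| + |(C2:ℝ) - 2*δ*((K+1)^(K+1) : ℕ)| := abs_add_le _ _
      _ ≤ (eSum K : ℝ) + ((K+1)^K : ℕ) := add_le_add ih hfull

lemma main_bound (hδ0 : 0 < δ) (hδ2 : δ < 1/2) (hφ0 : 0 ≤ φ) (hφ1 : φ < 1)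
    (a : ℕ → ℝ)
    (ha : ∀ k : ℕ, 1 ≤ k → ∀ n : ℕ, blockEnd (k - 1) < n → n ≤ blockEnd k →
      a n = (((n - blockEnd (k - 1)) % k : ℕ) : ℝ) / k)
    (N : ℕ) (hK3 : 3 ≤ Kof N) :
    |(((Finset.range (N+1)).filter (fun n => circleDist (a n) φ < δ)).card : ℝ) - 2*δ*N|
      ≤ 7*(N:ℝ)/(((Kof N : ℕ) : ℝ) - 1) := by
  set K := Kof N with hKdef
  have hNle : N ≤ blockEnd K := le_blockEnd_Kof N
  have hNgt : blockEnd (K-1) < N := blockEnd_lt_of_lt_Kof (by omega)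
  have hbe : blockEnd K = blockEnd (K-1) + K^K := blockEnd_sub_one K (by omega)
  set m := N - blockEnd (K-1) with hm
  have hm1 : 1 ≤ m := by omega
  have hmK : m ≤ K^K := by omega
  have hNm : blockEnd (K-1) + m = N := by omega
  -- Ioc decomposition
  have hsplitI : Finset.Ioc 0 N
      = Finset.Ioc 0 (blockEnd (K-1)) ∪ Finset.Ioc (blockEnd (K-1)) (blockEnd (K-1) + m) := by
    rw [hNm]
    exact (Finset.Ioc_union_Ioc_eq_Ioc (Nat.zero_le _) (by omega)).symm
  have hdisjI : Disjoint (Finset.Ioc 0 (blockEnd (K-1)))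
      (Finset.Ioc (blockEnd (K-1)) (blockEnd (K-1) + m)) := by
    rw [Finset.disjoint_left]
    intro n h1 h2
    rw [Finset.mem_Ioc] at h1 h2
    omega
  have hdisj := Finset.disjoint_filter_filter
    (p := fun n => circleDist (a n) φ < δ) (q := fun n => circleDist (a n) φ < δ) hdisjI
  set C1 : ℕ := ((Finset.Ioc 0 (blockEnd (K-1))).filter (fun n => circleDist (a n) φ < δ)).card
    with hC1
  set C2 : ℕ := ((Finset.Ioc (blockEnd (K-1)) (blockEnd (K-1) + m)).filter
      (fun n => circleDist (a n) φ < δ)).card with hC2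
  have hIoccard : ((Finset.Ioc 0 N).filter (fun n => circleDist (a n) φ < δ)).card = C1 + C2 := by
    rw [hsplitI, Finset.filter_union, Finset.card_union_of_disjoint hdisj]
  have hK0 : (0:ℝ) < K := by
    have : (0:ℕ) < K := by omega
    exact_mod_cast this
  have hpre := prefix_bound hδ0 hδ2 hφ0 hφ1 a ha (K-1)
  have hbc := bcount_bound hδ0 hδ2 hφ0 hφ1 a ha K m (by omega) hmK
  rw [← hC1] at hpre
  rw [← hC2] at hbc
  have hNcast : (N:ℝ) = (blockEnd (K-1) : ℝ) + m := by exact_mod_cast hNm.symm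
  have hIoc : |((C1 + C2 : ℕ) : ℝ) - 2*δ*N| ≤ (eSum (K-1) : ℝ) + (m:ℝ)/K + K + 1 := by
    calc |((C1 + C2 : ℕ) : ℝ) - 2*δ*N|
        = |((C1:ℝ) - 2*δ*(blockEnd (K-1))) + ((C2:ℝ) - 2*δ*m)| := by
          rw [hNcast]; push_cast; ring_nf
      _ ≤ |(C1:ℝ) - 2*δ*(blockEnd (K-1))| + |(C2:ℝ) - 2*δ*m| := abs_add_le _ _
      _ ≤ (eSum (K-1) : ℝ) + ((m:ℝ)/K + K + 1) := add_le_add hpre hbc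
      _ = (eSum (K-1) : ℝ) + (m:ℝ)/K + K + 1 := by ring
  -- range (N+1) vs Ioc 0 N
  have hrange : Finset.range (N+1) = insert 0 (Finset.Ioc 0 N) := by
    ext n
    simp only [Finset.mem_range, Finset.mem_insert, Finset.mem_Ioc, Nat.lt_succ_iff]
    omega
  have h0notin : (0:ℕ) ∉ (Finset.Ioc 0 N).filter (fun n => circleDist (a n) φ < δ) := by
    simp [Finset.mem_filter]
  have hCrange : |(((Finset.range (N+1)).filter (fun n => circleDist (a n) φ < δ)).card : ℝ)
      - 2*δ*N| ≤ (eSum (K-1) : ℝ) + (m:ℝ)/K + K + 2 := by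
    rw [hrange, Finset.filter_insert]
    split_ifs with h0P
    · rw [Finset.card_insert_of_notMem h0notin, hIoccard]
      have h1 : (((C1 + C2 + 1 : ℕ)) : ℝ) - 2*δ*N
          = (((C1 + C2 : ℕ) : ℝ) - 2*δ*N) + 1 := by push_cast; ring
      rw [h1]
      calc |(((C1 + C2 : ℕ) : ℝ) - 2*δ*N) + 1|
          ≤ |((C1 + C2 : ℕ) : ℝ) - 2*δ*N| + 1 := by
            calc |(((C1 + C2 : ℕ) : ℝ) - 2*δ*N) + 1| ≤ |((C1 + C2 : ℕ) : ℝ) - 2*δ*N| + |(1:ℝ)| :=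
                  abs_add_le _ _
              _ = |((C1 + C2 : ℕ) : ℝ) - 2*δ*N| + 1 := by norm_num
        _ ≤ (eSum (K-1) : ℝ) + (m:ℝ)/K + K + 1 + 1 := by linarith
        _ = (eSum (K-1) : ℝ) + (m:ℝ)/K + K + 2 := by ring
    · rw [hIoccard]
      linarith
  -- arithmetic estimate
  have hKB : (1:ℕ) ≤ K - 1 := by omega
  have he := eSum_le (K-1) hKB
  have hpowN : (K-1)^(K-1) < N := lt_of_le_of_lt (pow_le_blockEnd (K-1) hKB) hNgt
  have hPB : (K-1) * (K-1)^(K-1-1) = (K-1)^(K-1) := by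
    rw [← pow_succ']
    congr 1
    omega
  have hB2 : (K-1)^2 ≤ (K-1)^(K-1) := Nat.pow_le_pow_right (by omega) (by omega)
  -- cast to ℝ
  set B : ℝ := ((K - 1 : ℕ) : ℝ) with hB
  have hBval : B = (K:ℝ) - 1 := by
    rw [hB]
    have : (1:ℕ) ≤ K := by omega
    push_cast [Nat.cast_sub this]
    ring
  have hB2' : (2:ℝ) ≤ B := by
    rw [hB]
    have : (2:ℕ) ≤ K - 1 := by omega
    exact_mod_cast this
  have hBpos : (0:ℝ) < B := by linarith
  have heR : ((eSum (K-1) : ℕ) : ℝ) ≤ 2 * (((K-1)^(K-1-1) : ℕ) : ℝ) := by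
    exact_mod_cast he
  have hPBR : B * (((K-1)^(K-1-1) : ℕ) : ℝ) = (((K-1)^(K-1) : ℕ) : ℝ) := by
    rw [hB]; exact_mod_cast congrArg (fun z : ℕ => (z:ℝ)) hPB
  have hB2R : B^2 ≤ (((K-1)^(K-1) : ℕ) : ℝ) := by
    rw [hB]
    have : (((K-1)^2 : ℕ) : ℝ) ≤ (((K-1)^(K-1) : ℕ) : ℝ) := by exact_mod_cast hB2
    push_cast at this ⊢
    linarith
  have hRN : (((K-1)^(K-1) : ℕ) : ℝ) ≤ N := by
    have : ((K-1)^(K-1) : ℕ) ≤ N := le_of_lt hpowN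
    exact_mod_cast this
  have hNnn : (0:ℝ) ≤ N := Nat.cast_nonneg N
  have hmN : (m:ℝ) ≤ N := by
    have : m ≤ N := by omega
    exact_mod_cast this
  have hdiv1 : (m:ℝ)/K ≤ (N:ℝ)/K := by gcongr
  have hdiv2 : (N:ℝ)/K ≤ (N:ℝ)/B := by
    apply div_le_div_of_nonneg_left hNnn hBpos
    rw [hBval]; linarith
  have hrest : ((eSum (K-1) : ℕ) : ℝ) + K + 2 ≤ 6*(N:ℝ)/B := by
    rw [le_div_iff₀ hBpos]
    have hKB' : (K:ℝ) = B + 1 := by rw [hBval]; ring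
    rw [hKB']
    set P : ℝ := (((K-1)^(K-1-1) : ℕ) : ℝ) with hP
    set R : ℝ := (((K-1)^(K-1) : ℕ) : ℝ) with hR
    have hPnn : (0:ℝ) ≤ P := Nat.cast_nonneg _
    have hEnn : (0:ℝ) ≤ ((eSum (K-1) : ℕ) : ℝ) := Nat.cast_nonneg _
    nlinarith [mul_le_mul_of_nonneg_right heR (le_of_lt hBpos), hPBR, hB2R, hRN,
      sq_nonneg (B - 2), mul_nonneg hPnn (le_of_lt hBpos)]
  have hfinal : ((eSum (K-1) : ℕ) : ℝ) + (m:ℝ)/K + K + 2 ≤ 7*(N:ℝ)/B := by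
    have h7 : 7*(N:ℝ)/B = (N:ℝ)/B + 6*(N:ℝ)/B := by ring
    rw [h7]
    linarith
  rw [← hBval]
  linarith [hCrange, hfinal]

end Analytic

end Stmt16


/-- Consider the sequence of angles advancing by step `1/k` in the `k`-th block
(`l_{k−1} < n ≤ l_k`), starting from `0` at `n = l_{k−1}`, so the `k`-th block repeats
the cycle `0, 1/k, …, (k−1)/k` exactly `k^{k−1}` times.  For `δ ∈ (0,1/2)` and a target
angle `φ`, the asymptotic density of `{n : ρ(a_n, φ) < δ}` exists and equals `2δ`. -/
theorem stmt_16 (a : ℕ → ℝ)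
    (ha : ∀ k : ℕ, 1 ≤ k → ∀ n : ℕ, blockEnd (k - 1) < n → n ≤ blockEnd k →
      a n = (((n - blockEnd (k - 1)) % k : ℕ) : ℝ) / k)
    (δ : ℝ) (hδ : δ ∈ Set.Ioo (0:ℝ) (1/2)) (φ : ℝ) (hφ : φ ∈ Set.Ico (0:ℝ) 1) :
    Filter.Tendsto
      (fun N : ℕ =>
        (((Finset.range (N + 1)).filter (fun n => circleDist (a n) φ < δ)).card : ℝ) / N)
      Filter.atTop (nhds (2 * δ)) := by
  obtain ⟨hδ0, hδ2⟩ := hδ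
  obtain ⟨hφ0, hφ1⟩ := hφ
  rw [Metric.tendsto_atTop]
  intro ε hε
  obtain ⟨K₀, hK₀⟩ := exists_nat_gt (max 2 (7/ε + 1))
  have hK₀2 : (2:ℝ) < K₀ := lt_of_le_of_lt (le_max_left _ _) hK₀
  have hK₀3 : 3 ≤ K₀ := by
    have : (2:ℕ) < K₀ := by exact_mod_cast hK₀2
    omega
  have hK₀1R : (1:ℝ) < (K₀:ℝ) - 1 := by linarith
  have hK₀ε : 7/((K₀:ℝ) - 1) < ε := by
    have h1 : 7/ε + 1 < K₀ := lt_of_le_of_lt (le_max_right _ _) hK₀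
    have h2 : 7/ε < (K₀:ℝ) - 1 := by linarith
    rw [div_lt_iff₀ (by linarith)]
    rw [div_lt_iff₀ hε] at h2
    linarith
  refine ⟨blockEnd (K₀ - 1) + 1, fun N hN => ?_⟩
  have hKN : K₀ ≤ Stmt16.Kof N := Stmt16.le_Kof (by omega) (by omega)
  have h3 : 3 ≤ Stmt16.Kof N := le_trans hK₀3 hKN
  have hb := Stmt16.main_bound hδ0 hδ2 hφ0 hφ1 a ha N h3
  have hN1 : 1 ≤ N := by omega
  have hN0 : (0:ℝ) < N := by exact_mod_cast hN1
  rw [Real.dist_eq]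
  have hKR : (1:ℝ) < ((Stmt16.Kof N : ℕ) : ℝ) - 1 := by
    have : (3:ℕ) ≤ Stmt16.Kof N := h3
    have h3R : (3:ℝ) ≤ ((Stmt16.Kof N : ℕ) : ℝ) := by exact_mod_cast this
    linarith
  have hKRpos : (0:ℝ) < ((Stmt16.Kof N : ℕ) : ℝ) - 1 := by linarith
  set C : ℕ := ((Finset.range (N + 1)).filter (fun n => circleDist (a n) φ < δ)).card with hC
  have heq : (C:ℝ)/N - 2*δ = ((C:ℝ) - 2*δ*N)/N := by
    field_simp
  rw [heq, abs_div, abs_of_pos hN0]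
  have hkey : |(C:ℝ) - 2*δ*N| / N ≤ 7/(((Stmt16.Kof N : ℕ) : ℝ) - 1) := by
    rw [div_le_iff₀ hN0]
    calc |(C:ℝ) - 2*δ*N| ≤ 7*(N:ℝ)/(((Stmt16.Kof N : ℕ) : ℝ) - 1) := hb
      _ = 7/(((Stmt16.Kof N : ℕ) : ℝ) - 1) * N := by ring
  have hmono : 7/(((Stmt16.Kof N : ℕ) : ℝ) - 1) ≤ 7/((K₀:ℝ) - 1) := by
    apply div_le_div_of_nonneg_left (by norm_num) (by linarith)
    have : (K₀:ℝ) ≤ ((Stmt16.Kof N : ℕ) : ℝ) := by exact_mod_cast hKN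
    linarith
  linarith
end
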